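/- arXiv:2205.05840 — 5 statements merged into one kernel-verified Lean document; each statement's English description precedes it below -/
import Mathlib

section
/- (Smoothing property.) Let E be a finite-dimensional real inner product space and let R : E → E be a linear operator that is self-adjoint (⟪Ru, v⟫ = ⟪u, Rv⟫ for all u, v) and satisfies 0 ≤ ⟪Rv, v⟫ ≤ ⟪v, v⟫ for all v ∈ E. Then for every integer m ≥ 1 and every v ∈ E, ⟪(I − R)(R^m v), R^m v⟫ ≤ (1/(2m)) · ⟪(I − R^{2m}) v, v⟫, where I denotes the identity operator. -/
open RealInnerProductSpace

/-- Smoothing property: for a self-adjoint operator `R` with `0 ≤ R ≤ I` in the sense of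
quadratic forms, `⟪(I - R) (R^m v), R^m v⟫ ≤ (1/(2m)) ⟪(I - R^(2m)) v, v⟫`. -/
theorem smoothing_property
    {E : Type*} [NormedAddCommGroup E] [InnerProductSpace ℝ E] [FiniteDimensional ℝ E]
    (R : E →ₗ[ℝ] E)
    (hsym : ∀ u v : E, ⟪R u, v⟫ = ⟪u, R v⟫)
    (hR0 : ∀ v : E, 0 ≤ ⟪R v, v⟫)
    (hR1 : ∀ v : E, ⟪R v, v⟫ ≤ ⟪v, v⟫)
    (m : ℕ) (hm : 1 ≤ m) (v : E) :
    ⟪((LinearMap.id : E →ₗ[ℝ] E) - R) ((R ^ m) v), (R ^ m) v⟫ ≤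
      (1 / (2 * (m : ℝ))) * ⟪((LinearMap.id : E →ₗ[ℝ] E) - R ^ (2 * m)) v, v⟫ := by
  -- composition of powers
  have hc : ∀ (p q : ℕ) (w : E), (R ^ p) ((R ^ q) w) = (R ^ (p + q)) w := by
    intro p q w; rw [pow_add]; rfl
  have hc1 : ∀ (q : ℕ) (w : E), R ((R ^ q) w) = (R ^ (q + 1)) w := by
    intro q w
    have := hc 1 q w
    rw [pow_one] at this
    rw [this]; congr 1; ring
  -- self-adjointness of powers
  have hpow_sym : ∀ (j : ℕ) (u w : E), ⟪(R ^ j) u, w⟫ = ⟪u, (R ^ j) w⟫ := by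
    intro j
    induction j with
    | zero => intro u w; simp
    | succ n ih =>
      intro u w
      have h1 : (R ^ (n + 1)) u = (R ^ n) (R u) := by
        rw [pow_succ]; rfl
      have h2 : (R ^ (n + 1)) w = R ((R ^ n) w) := (hc1 n w).symm
      rw [h1, h2, ih, hsym]
  -- positivity of powers
  have hpow_pos : ∀ (j : ℕ) (w : E), 0 ≤ ⟪(R ^ j) w, w⟫ := by
    intro j w
    rcases Nat.even_or_odd j with ⟨k, hk⟩ | ⟨k, hk⟩
    · subst hk
      have h1 : (R ^ (k + k)) w = (R ^ k) ((R ^ k) w) := (hc k k w).symm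
      rw [h1, hpow_sym k]
      exact real_inner_self_nonneg
    · subst hk
      have h1 : (R ^ (2 * k + 1)) w = (R ^ k) (R ((R ^ k) w)) := by
        rw [hc1 k w, hc k (k + 1) w]; congr 1; ring
      rw [h1, hpow_sym k]
      exact hR0 _
  -- the sequence b j = ⟪R^j v, v⟫ and a j = b j - b (j+1)
  set b : ℕ → ℝ := fun j => ⟪(R ^ j) v, v⟫ with hb
  set a : ℕ → ℝ := fun j => b j - b (j + 1) with ha
  -- key shift identity: ⟪R^j v, R v⟫ = b (j+1)
  have hshift : ∀ j : ℕ, ⟪(R ^ j) v, R v⟫ = b (j + 1) := by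
    intro j
    calc ⟪(R ^ j) v, R v⟫ = ⟪R v, (R ^ j) v⟫ := real_inner_comm _ _
      _ = ⟪v, R ((R ^ j) v)⟫ := hsym _ _
      _ = ⟪R ((R ^ j) v), v⟫ := real_inner_comm _ _
      _ = b (j + 1) := by rw [hc1 j v]
  -- monotonicity: a (j+1) ≤ a j
  have hmono : ∀ j : ℕ, a (j + 1) ≤ a j := by
    intro j
    have hkey : (0:ℝ) ≤ ⟪(R ^ j) (v - R v), v - R v⟫ := hpow_pos j _
    have hexp : ⟪(R ^ j) (v - R v), v - R v⟫ = a j - a (j + 1) := by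
      have h1 : (R ^ j) (v - R v) = (R ^ j) v - (R ^ (j + 1)) v := by
        rw [map_sub]
        congr 1
      rw [h1, inner_sub_left, inner_sub_right, inner_sub_right]
      rw [hshift j, hshift (j + 1)]
    linarith
  have hanti : ∀ j k : ℕ, j ≤ k → a k ≤ a j := by
    intro j k hjk
    exact antitone_nat_of_succ_le hmono hjk
  -- telescoping sum
  have hsum : ∑ j ∈ Finset.range (2 * m), a j = b 0 - b (2 * m) :=
    Finset.sum_range_sub' b (2 * m)
  -- lower bound on the sum
  have hcard := Finset.card_nsmul_le_sum (Finset.range (2 * m)) a (a (2 * m))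
    (fun i hi => hanti i (2 * m) (le_of_lt (Finset.mem_range.mp hi)))
  rw [Finset.card_range, hsum] at hcard
  have hbound : (2 * (m : ℝ)) * a (2 * m) ≤ b 0 - b (2 * m) := by
    have h2 : ((2 * m : ℕ) : ℝ) * a (2 * m) ≤ b 0 - b (2 * m) := by
      rw [← nsmul_eq_mul]; exact hcard
    push_cast at h2
    linarith
  -- identify LHS with a (2m)
  have hlhs : ⟪((LinearMap.id : E →ₗ[ℝ] E) - R) ((R ^ m) v), (R ^ m) v⟫ = a (2 * m) := by
    have h1 : ((LinearMap.id : E →ₗ[ℝ] E) - R) ((R ^ m) v) = (R ^ m) v - R ((R ^ m) v) := by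
      simp [LinearMap.sub_apply]
    rw [h1, inner_sub_left]
    have e1 : ⟪(R ^ m) v, (R ^ m) v⟫ = b (2 * m) := by
      rw [hpow_sym m, hc m m v, real_inner_comm]
      have : m + m = 2 * m := by ring
      rw [this]
    have e2 : ⟪R ((R ^ m) v), (R ^ m) v⟫ = b (2 * m + 1) := by
      rw [real_inner_comm, hpow_sym m, hc1 m v, hc m (m + 1) v, real_inner_comm]
      have : m + (m + 1) = 2 * m + 1 := by ring
      rw [this]
    rw [e1, e2]
  -- identify RHS inner product
  have hrhs : ⟪((LinearMap.id : E →ₗ[ℝ] E) - R ^ (2 * m)) v, v⟫ = b 0 - b (2 * m) := by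
    simp [LinearMap.sub_apply, inner_sub_left, hb]
  rw [hlhs, hrhs]
  have hm' : (0:ℝ) < 2 * (m : ℝ) := by positivity
  rw [div_mul_eq_mul_div, one_mul, le_div_iff₀ hm']
  linarith
end

section
/- (Abstract form of the second approximation property.) Let V be a finite-dimensional real vector space equipped with two inner products a(·,·) and b(·,·), and let S : V → V be the unique linear operator satisfying a(u, w) = b(S u, w) for all u, w ∈ V. Let C > 0, and let v, w ∈ V satisfy a(w, v − w) = 0 and b(w, w) ≤ C · a(w, w). Then a(w, w) ≤ C · a(S v, v). -/
/-- Cauchy–Schwarz for a symmetric positive-definite bilinear form. -/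
lemma bilin_cauchy_schwarz {V : Type*} [AddCommGroup V] [Module ℝ V]
    (b : V →ₗ[ℝ] V →ₗ[ℝ] ℝ)
    (hb_symm : ∀ u w : V, b u w = b w u)
    (hb_pos : ∀ v : V, v ≠ 0 → 0 < b v v)
    (x y : V) : (b x y) ^ 2 ≤ b x x * b y y := by
  by_cases hy : y = 0
  · simp [hy]
  have hr : 0 < b y y := hb_pos y hy
  have hnn : 0 ≤ b (b y y • x - b x y • y) (b y y • x - b x y • y) := by
    by_cases hz : b y y • x - b x y • y = 0
    · simp [hz]
    · exact (hb_pos _ hz).le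
  have hexp : b (b y y • x - b x y • y) (b y y • x - b x y • y)
      = b y y * (b x x * b y y - (b x y) ^ 2) := by
    simp [map_sub, map_smul, hb_symm y x]
    ring
  rw [hexp] at hnn
  nlinarith

/-- Abstract form of the second approximation property.  With two inner products `a`, `b` on a
finite-dimensional real vector space and `S` determined by `a u w = b (S u) w`, if
`a w (v - w) = 0` and `b w w ≤ C * a w w`, then `a w w ≤ C * a (S v) v`. -/
theorem abstract_approximation_II
    {V : Type*} [AddCommGroup V] [Module ℝ V] [FiniteDimensional ℝ V]
    (a b : V →ₗ[ℝ] V →ₗ[ℝ] ℝ)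
    (ha_symm : ∀ u w : V, a u w = a w u)
    (ha_pos : ∀ v : V, v ≠ 0 → 0 < a v v)
    (hb_symm : ∀ u w : V, b u w = b w u)
    (hb_pos : ∀ v : V, v ≠ 0 → 0 < b v v)
    (S : V →ₗ[ℝ] V)
    (hS : ∀ u w : V, a u w = b (S u) w)
    (C : ℝ) (hC : 0 < C) (v w : V)
    (horth : a w (v - w) = 0)
    (happrox : b w w ≤ C * a w w) :
    a w w ≤ C * a (S v) v := by
  -- a w w = a w v
  have hwv : a w v = a w w := by
    have := horth
    simp [map_sub] at this
    linarith
  -- a w w = b (S v) w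
  have key : a w w = b (S v) w := by
    rw [← hwv, ha_symm, hS]
  -- b (S v) (S v) = a (S v) v
  have hSvv : b (S v) (S v) = a (S v) v := by
    rw [ha_symm, hS]
  have hSvv_nn : 0 ≤ a (S v) v := by
    rw [← hSvv]
    by_cases h : S v = 0
    · simp [h]
    · exact (hb_pos _ h).le
  have haww_nn : 0 ≤ a w w := by
    by_cases h : w = 0
    · simp [h]
    · exact (ha_pos _ h).le
  have hcs := bilin_cauchy_schwarz b hb_symm hb_pos (S v) w
  -- (a w w)^2 ≤ b(Sv,Sv) * b(w,w) ≤ a(Sv,v) * C * a w w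
  have h1 : (a w w) ^ 2 ≤ a (S v) v * (C * a w w) := by
    calc (a w w) ^ 2 = (b (S v) w) ^ 2 := by rw [key]
      _ ≤ b (S v) (S v) * b w w := hcs
      _ ≤ a (S v) v * (C * a w w) := by
          rw [hSvv]; exact mul_le_mul_of_nonneg_left happrox hSvv_nn
  by_cases h0 : a w w = 0
  · rw [h0]; positivity
  · have hpos : 0 < a w w := lt_of_le_of_ne haww_nn (Ne.symm h0)
    nlinarith
end

section
/- (Two-level V-cycle contraction: the induction step of the convergence theorem.) Let E be a finite-dimensional real inner product space, W a subspace of E, and P : E → E the orthogonal projection onto W. Let R : E → E be linear, self-adjoint, and satisfy 0 ≤ ⟪Rv, v⟫ ≤ ⟪v, v⟫ for all v ∈ E. Let m ≥ 1 be an integer, C > 0 a constant, and assume the approximation property ⟪v − Pv, v − Pv⟫ ≤ C · ⟪(I − R)v, v⟫ for all v ∈ E. Set δ := C/(C + 2m). Let E' : E → E be a linear operator with range contained in W such that ⟪E' w, w⟫ ≤ δ · ⟪w, w⟫ for all w ∈ W. Then the operator Ẽ := R^m ∘ (I − P + E' ∘ P) ∘ R^m satisfies ⟪Ẽ v, v⟫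 ≤ δ · ⟪v, v⟫ for all v ∈ E. -/
open RealInnerProductSpace

/-- Two-level V-cycle contraction (induction step of the convergence theorem).  If `P` is the
orthogonal projection onto a subspace `W`, `R` is self-adjoint with `0 ≤ R ≤ I`, the
approximation property `⟪v - Pv, v - Pv⟫ ≤ C ⟪(I - R) v, v⟫` holds, and the coarse error
operator `E'` maps into `W` with `⟪E' w, w⟫ ≤ δ ⟪w, w⟫` on `W` where `δ = C/(C + 2m)`, then
`Ẽ = R^m (I - P + E' P) R^m` satisfies `⟪Ẽ v, v⟫ ≤ δ ⟪v, v⟫`. -/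
theorem two_level_vcycle_contraction
    {E : Type*} [NormedAddCommGroup E] [InnerProductSpace ℝ E] [FiniteDimensional ℝ E]
    (W : Submodule ℝ E) (P : E →ₗ[ℝ] E)
    (hPmem : ∀ x : E, P x ∈ W)
    (hPfix : ∀ x ∈ W, P x = x)
    (hPorth : ∀ x : E, ∀ w ∈ W, ⟪x - P x, w⟫ = 0)
    (R : E →ₗ[ℝ] E)
    (hsym : ∀ u v : E, ⟪R u, v⟫ = ⟪u, R v⟫)
    (hR0 : ∀ v : E, 0 ≤ ⟪R v, v⟫)
    (hR1 : ∀ v : E, ⟪R v, v⟫ ≤ ⟪v, v⟫)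
    (m : ℕ) (hm : 1 ≤ m) (C : ℝ) (hC : 0 < C)
    (happrox : ∀ v : E, ⟪v - P v, v - P v⟫ ≤ C * ⟪((LinearMap.id : E →ₗ[ℝ] E) - R) v, v⟫)
    (E' : E →ₗ[ℝ] E) (hE'range : ∀ x : E, E' x ∈ W)
    (hE'bound : ∀ w ∈ W, ⟪E' w, w⟫ ≤ (C / (C + 2 * (m : ℝ))) * ⟪w, w⟫)
    (v : E) :
    ⟪(R ^ m * ((LinearMap.id : E →ₗ[ℝ] E) - P + E' * P) * R ^ m) v, v⟫
      ≤ (C / (C + 2 * (m : ℝ))) * ⟪v, v⟫ := by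
  set δ : ℝ := C / (C + 2 * (m : ℝ)) with hδ
  have hden : (0:ℝ) < C + 2 * m := by positivity
  have hδ0 : 0 ≤ δ := by positivity
  have hδ1 : δ ≤ 1 := by
    rw [hδ, div_le_one hden]
    have : (0:ℝ) ≤ 2 * (m:ℝ) := by positivity
    linarith
  -- self-adjointness of powers
  have hsymPow : ∀ (n : ℕ) (y z : E), ⟪(R ^ n) y, z⟫ = ⟪y, (R ^ n) z⟫ := by
    intro n
    induction n with
    | zero => intro y z; simp
    | succ n ih =>
      intro y z
      have l1 : (R ^ (n + 1)) y = R ((R ^ n) y) := by rw [pow_succ']; rfl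
      have l2 : (R ^ (n + 1)) z = (R ^ n) (R z) := by rw [pow_succ]; rfl
      rw [l1, hsym, ih, ← l2]
  set x : ℕ → E := fun k => (R ^ k) v with hx
  have hxs : ∀ k, R (x k) = x (k + 1) := by
    intro k
    simp only [hx, pow_succ', Module.End.mul_apply]
  set b : ℕ → ℝ := fun k => ⟪x k, v⟫ with hb
  have hbb : ∀ i j : ℕ, ⟪x i, x j⟫ = b (i + j) := by
    intro i j
    rw [hb]
    simp only [hx]
    rw [← hsymPow j ((R ^ i) v) v, ← Module.End.mul_apply, ← pow_add, Nat.add_comm j i]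
  set a : ℕ → ℝ := fun k => b k - b (k + 1) with ha
  have hstep : ∀ k, a (k + 1) ≤ a k := by
    intro k
    rcases Nat.even_or_odd k with ⟨j, hj⟩ | ⟨j, hj⟩
    · subst hj
      have h := real_inner_self_nonneg (x := x j - x (j + 1))
      rw [inner_sub_left, inner_sub_right, inner_sub_right, hbb, hbb, hbb, hbb] at h
      have e1 : j + (j + 1) = j + j + 1 := by omega
      have e2 : (j + 1) + (j + 1) = j + j + 1 + 1 := by omega
      have e3 : j + 1 + j = j + j + 1 := by omega
      rw [e1, e2, e3] at h
      simp only [ha]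
      linarith
    · subst hj
      have h := hR0 (x j - x (j + 1))
      rw [map_sub, hxs, hxs, inner_sub_left, inner_sub_right, inner_sub_right,
        hbb, hbb, hbb, hbb] at h
      have e1 : (j + 1) + j = 2 * j + 1 := by omega
      have e2 : (j + 1) + (j + 1) = 2 * j + 1 + 1 := by omega
      have e3 : (j + 1 + 1) + j = 2 * j + 1 + 1 := by omega
      have e4 : (j + 1 + 1) + (j + 1) = 2 * j + 1 + 1 + 1 := by omega
      rw [e1, e2, e3, e4] at h
      simp only [ha]
      linarith
  have hanti : ∀ k l : ℕ, k ≤ l → a l ≤ a k :=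
    fun k l h => antitone_nat_of_succ_le hstep h
  have hsum : ∑ k ∈ Finset.range (2 * m), a k = b 0 - b (2 * m) := by
    simpa only [ha] using Finset.sum_range_sub' b (2 * m)
  have hkey : (2 * (m:ℝ)) * a (2 * m) ≤ b 0 - b (2 * m) := by
    have h := Finset.card_nsmul_le_sum (Finset.range (2 * m)) a (a (2 * m))
      (fun i hi => hanti i (2 * m) (le_of_lt (Finset.mem_range.mp hi)))
    rw [Finset.card_range, nsmul_eq_mul, hsum] at h
    push_cast at h
    linarith
  -- the vector u = R^m v
    -- main computation
  set u : E := x m with hu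
  have hPuW : P u ∈ W := hPmem u
  have hperp : ⟪u - P u, P u⟫ = 0 := hPorth u (P u) hPuW
  set e : ℝ := ⟪u - P u, u - P u⟫ with he
  have h1 : ⟪u - P u, u⟫ = e := by
    have h2 : ⟪u - P u, u - P u⟫ = ⟪u - P u, u⟫ - ⟪u - P u, P u⟫ := inner_sub_right _ _ _
    rw [hperp] at h2
    linarith [h2]
  have huu : ⟪u, u⟫ = b (2 * m) := by
    rw [hu, hbb]
    congr 1
    omega
  have hRuu : ⟪R u, u⟫ = b (2 * m + 1) := by
    rw [hu, hxs, hbb]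
    congr 1
    omega
  have hpyth : ⟪P u, P u⟫ = b (2 * m) - e := by
    have h2 : ⟪u - P u, u - P u⟫ = ⟪u - P u, u⟫ - ⟪u - P u, P u⟫ := inner_sub_right _ _ _
    have h3 : ⟪u - P u, u⟫ = ⟪u, u⟫ - ⟪P u, u⟫ := inner_sub_left _ _ _
    have h4 : ⟪u - P u, P u⟫ = ⟪u, P u⟫ - ⟪P u, P u⟫ := inner_sub_left _ _ _
    have h5 : ⟪P u, u⟫ = ⟪u, P u⟫ := real_inner_comm _ _
    rw [hperp] at h2 h4
    rw [← he] at h2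
    linarith
  have happrox' : e ≤ C * a (2 * m) := by
    have hA : ⟪((LinearMap.id : E →ₗ[ℝ] E) - R) u, u⟫ = a (2 * m) := by
      rw [LinearMap.sub_apply, LinearMap.id_apply, inner_sub_left, hRuu, huu]
      try simp only [ha]
    have h := happrox u
    rw [hA, ← he] at h
    exact h
  have hE2 : ⟪E' (P u), u⟫ ≤ δ * b (2 * m) - δ * e := by
    have hz : ⟪E' (P u), u - P u⟫ = 0 := by
      rw [real_inner_comm]
      exact hPorth u _ (hE'range _)
    have hsplit : ⟪E' (P u), u⟫ = ⟪E' (P u), P u⟫ + ⟪E' (P u), u - P u⟫ := by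
      rw [← inner_add_right]
      congr 1
      abel
    have hbd := hE'bound (P u) hPuW
    rw [hsplit, hz, add_zero]
    calc ⟪E' (P u), P u⟫ ≤ δ * ⟪P u, P u⟫ := hbd
      _ = δ * b (2 * m) - δ * e := by rw [hpyth]; ring
  have hLHS : ⟪(R ^ m * ((LinearMap.id : E →ₗ[ℝ] E) - P + E' * P) * R ^ m) v, v⟫
      = ⟪u - P u, u⟫ + ⟪E' (P u), u⟫ := by
    have harg : (R ^ m * ((LinearMap.id : E →ₗ[ℝ] E) - P + E' * P) * R ^ m) v
        = (R ^ m) ((u - P u) + E' (P u)) := by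
      simp only [Module.End.mul_apply, LinearMap.add_apply, LinearMap.sub_apply,
        LinearMap.id_apply, hu, hx]
    rw [harg, hsymPow, inner_add_left]
    try rfl
  have hb0 : b 0 = ⟪v, v⟫ := by simp [hb, hx]
  rw [hLHS, h1, ← hb0]
  have hCδ : (1 - δ) * C = 2 * (m:ℝ) * δ := by
    rw [hδ]
    field_simp
    try ring
  have hCδA : (1 - δ) * (C * a (2 * m)) = δ * (2 * (m:ℝ) * a (2 * m)) := by
    rw [← mul_assoc, hCδ]
    try ring
  have t1 : (1 - δ) * e ≤ (1 - δ) * (C * a (2 * m)) :=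
    mul_le_mul_of_nonneg_left happrox' (by linarith)
  have t2 : δ * (2 * (m:ℝ) * a (2 * m)) ≤ δ * (b 0 - b (2 * m)) :=
    mul_le_mul_of_nonneg_left hkey hδ0
  nlinarith [t1, t2, hCδA, hE2]
end

section
/- (Multilevel V-cycle quadratic form bound.) Let E be a finite-dimensional real inner product space and let V_0 ⊆ V_1 ⊆ ⋯ ⊆ V_K be a chain of subspaces of E. For each 1 ≤ k ≤ K, let R_k : V_k → V_k be linear, self-adjoint with respect to the restricted inner product, and satisfy 0 ≤ ⟪R_k v, v⟫ ≤ ⟪v, v⟫ for all v ∈ V_k; let P_k : V_k → V_{k-1} be the orthogonal projection of V_k onto V_{k-1} and ι_k : V_{k-1} → V_k the inclusion. Fix an integer m ≥ 1 and a constant C > 0, and assume the approximation property ⟪v − ι_k P_k v, v − ι_k P_k v⟫ ≤ C · ⟪(Id − R_k) v, v⟫ for all v ∈ V_k and all 1 ≤ k ≤ K. Define E_0 := 0 on V_0 and, recursively, E_k := R_k^m ∘ (Id_{V_k} − ι_k ∘ P_k + ι_k ∘ E_{k-1} ∘ P_k) ∘ R_k^m on V_k. Then for every 0 ≤ k ≤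 K and every v ∈ V_k, ⟪E_k v, v⟫ ≤ (C/(C + 2m)) · ⟪v, v⟫. -/
open RealInnerProductSpace

section Aux
variable {F : Type*} [NormedAddCommGroup F] [InnerProductSpace ℝ F]

lemma pow_sym_aux (S : F →ₗ[ℝ] F) (hsym : ∀ u v : F, ⟪S u, v⟫ = ⟪u, S v⟫) :
    ∀ (n : ℕ) (u w : F), ⟪(S ^ n) u, w⟫ = ⟪u, (S ^ n) w⟫ := by
  intro n
  induction n with
  | zero => intro u w; simp
  | succ n ih =>
    intro u w
    have h1 : (S ^ (n+1)) u = (S ^ n) (S u) := by rw [pow_succ]; rfl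
    have h2 : (S ^ (n+1)) w = S ((S ^ n) w) := by rw [pow_succ']; rfl
    rw [h1, h2, ih, hsym]
lemma comm_pow_aux (S : F →ₗ[ℝ] F) (n : ℕ) (x : F) :
    (S ^ n) (S x) = S ((S ^ n) x) := by
  have h : S ^ n * S = S * S ^ n := by rw [← pow_succ, ← pow_succ']
  calc (S ^ n) (S x) = (S ^ n * S) x := rfl
    _ = (S * S ^ n) x := by rw [h]
    _ = S ((S ^ n) x) := rfl

/-- Key polynomial inequality for the smoother: for self-adjoint `0 ≤ S`,
`2m ⟪(I-S)S^{2m} v, v⟫ + ⟪S^{2m} v, v⟫ ≤ ⟪v,v⟫`. -/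
lemma smoother_ineq (S : F →ₗ[ℝ] F) (hsym : ∀ u v : F, ⟪S u, v⟫ = ⟪u, S v⟫)
    (h0 : ∀ v : F, 0 ≤ ⟪S v, v⟫) (m : ℕ) (v : F) :
    2 * (m : ℝ) * ⟪(S ^ (2*m)) v - S ((S ^ (2*m)) v), v⟫ + ⟪(S ^ (2*m)) v, v⟫ ≤ ⟪v, v⟫ := by
  -- T x = x - S x, applied pointwise
  set T : F → F := fun x => x - S x with hT
  have hTmap : ∀ x, T x = x - S x := fun x => rfl
  have hTsym : ∀ x y : F, ⟪T x, y⟫ = ⟪x, T y⟫ := by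
    intro x y
    simp only [hTmap, inner_sub_left, inner_sub_right, hsym]
  have hcS : ∀ x : F, T (S x) = S (T x) := by
    intro x; simp only [hTmap, map_sub]
  have hcT : ∀ (n : ℕ) (x : F), T ((S ^ n) x) = (S ^ n) (T x) := by
    intro n x
    simp only [hTmap, map_sub, comm_pow_aux]
  set d : ℕ → ℝ := fun j => ⟪T ((S ^ j) v), v⟫ with hd
  set a : ℕ → ℝ := fun j => ⟪(S ^ j) v, v⟫ with ha
  have hpowsplit : ∀ (i : ℕ) (x : F), (S ^ (i + i)) x = (S ^ i) ((S ^ i) x) := by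
    intro i x; rw [pow_add]; rfl
  have hda : ∀ j, a j - a (j+1) = d j := by
    intro j
    have h1 : (S ^ (j+1)) v = S ((S ^ j) v) := by rw [pow_succ']; rfl
    simp only [hd, ha, hTmap, h1, inner_sub_left]
  have hstep : ∀ j, d (j+1) ≤ d j := by
    intro j
    have key : 0 ≤ ⟪T (T ((S ^ j) v)), v⟫ := by
      rcases Nat.even_or_odd j with ⟨i, hi⟩ | ⟨i, hi⟩
      · subst hi
        have hrw : T (T ((S ^ (i + i)) v)) = (S ^ i) (T (T ((S ^ i) v))) := by
          rw [hpowsplit, hcT, hcT]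
        rw [hrw, pow_sym_aux S hsym, hTsym]
        exact real_inner_self_nonneg
      · subst hi
        have hsplit : (S ^ (2*i+1)) v = (S ^ i) (S ((S ^ i) v)) := by
          have h2 : 2*i+1 = i + (1 + i) := by ring
          rw [h2, pow_add, pow_add, pow_one]
          rfl
        have hrw : T (T ((S ^ (2*i+1)) v)) = (S ^ i) (S (T (T ((S ^ i) v)))) := by
          rw [hsplit, hcT, hcS, hcT, hcS]
        rw [hrw, pow_sym_aux S hsym, hsym, hTsym, hcS]
        calc (0:ℝ) ≤ ⟪S (T ((S ^ i) v)), T ((S ^ i) v)⟫ := h0 _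
          _ = ⟪T ((S ^ i) v), S (T ((S ^ i) v))⟫ := real_inner_comm _ _
    have hop : d j - d (j+1) = ⟪T (T ((S ^ j) v)), v⟫ := by
      have h1 : (S ^ (j+1)) v = S ((S ^ j) v) := by rw [pow_succ']; rfl
      have h2 : T ((S ^ j) v) - T (S ((S ^ j) v)) = T (T ((S ^ j) v)) := by
        simp only [hTmap, map_sub]
      simp only [hd, h1, ← inner_sub_left, h2]
    linarith [key]
  have hanti : ∀ i j : ℕ, i ≤ j → d j ≤ d i := fun i j h =>
    antitone_nat_of_succ_le hstep h
  have hsum : a 0 - a (2*m) = ∑ j ∈ Finset.range (2*m), d j := by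
    rw [← Finset.sum_range_sub' a (2*m)]
    exact Finset.sum_congr rfl fun j _ => hda j
  have hlb : (2*m : ℝ) * d (2*m) ≤ ∑ j ∈ Finset.range (2*m), d j := by
    have h1 : ∑ j ∈ Finset.range (2*m), d (2*m) ≤ ∑ j ∈ Finset.range (2*m), d j :=
      Finset.sum_le_sum fun j hj => hanti j (2*m) (le_of_lt (Finset.mem_range.mp hj))
    calc (2*m : ℝ) * d (2*m) = ∑ _j ∈ Finset.range (2*m), d (2*m) := by
          rw [Finset.sum_const, Finset.card_range, nsmul_eq_mul]; push_cast; ring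
      _ ≤ _ := h1
  have ha0 : a 0 = ⟪v, v⟫ := by simp [ha]
  have hdm : d (2*m) = ⟪(S ^ (2*m)) v - S ((S ^ (2*m)) v), v⟫ := rfl
  have ham : a (2*m) = ⟪(S ^ (2*m)) v, v⟫ := rfl
  rw [← hdm, ← ham, ← ha0]
  linarith [hsum, hlb]

end Aux

/-- Multilevel V-cycle quadratic form bound.  For a chain of subspaces
`V 0 ≤ V 1 ≤ ⋯ ≤ V K` with self-adjoint smoothing error operators `R k` satisfying
`0 ≤ R k ≤ I`, orthogonal projections `P k : V (k+1) → V k` satisfying the approximation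
property, and the V-cycle recursion with `m ≥ 1` smoothing steps, the error operators satisfy
`⟪Err k v, v⟫ ≤ (C/(C + 2m)) ⟪v, v⟫`. -/
theorem vcycle_quadratic_form_bound
    {E : Type*} [NormedAddCommGroup E] [InnerProductSpace ℝ E] [FiniteDimensional ℝ E]
    (K : ℕ) (V : ℕ → Submodule ℝ E) (hmono : ∀ k, V k ≤ V (k + 1))
    (R : ∀ k, V k →ₗ[ℝ] V k)
    (hsym : ∀ k, 1 ≤ k → k ≤ K → ∀ u v : V k, ⟪R k u, v⟫ = ⟪u, R k v⟫)
    (hR0 : ∀ k, 1 ≤ k → k ≤ K → ∀ v : V k, 0 ≤ ⟪R k v, v⟫)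
    (hR1 : ∀ k, 1 ≤ k → k ≤ K → ∀ v : V k, ⟪R k v, v⟫ ≤ ⟪v, v⟫)
    (P : ∀ k, V (k + 1) →ₗ[ℝ] V k)
    (hP : ∀ k, k + 1 ≤ K → ∀ v : V (k + 1), ∀ w : V k,
      ⟪v - Submodule.inclusion (hmono k) (P k v), Submodule.inclusion (hmono k) w⟫ = 0)
    (m : ℕ) (hm : 1 ≤ m) (C : ℝ) (hC : 0 < C)
    (happrox : ∀ k, k + 1 ≤ K → ∀ v : V (k + 1),
      ⟪v - Submodule.inclusion (hmono k) (P k v), v - Submodule.inclusion (hmono k) (P k v)⟫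
        ≤ C * ⟪((LinearMap.id : V (k + 1) →ₗ[ℝ] V (k + 1)) - R (k + 1)) v, v⟫)
    (Err : ∀ k, V k →ₗ[ℝ] V k)
    (hErr0 : Err 0 = 0)
    (hErrRec : ∀ k, k + 1 ≤ K →
      Err (k + 1) = R (k + 1) ^ m *
        ((LinearMap.id : V (k + 1) →ₗ[ℝ] V (k + 1))
          - (Submodule.inclusion (hmono k)).comp (P k)
          + (Submodule.inclusion (hmono k)).comp ((Err k).comp (P k))) *
        R (k + 1) ^ m) :
    ∀ k ≤ K, ∀ v : V k, ⟪Err k v, v⟫ ≤ (C / (C + 2 * (m : ℝ))) * ⟪v, v⟫ := by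
  have hCm : (0:ℝ) < C + 2 * m := by positivity
  have hδ0 : (0:ℝ) ≤ C / (C + 2 * m) := by positivity
  have h1δ : (0:ℝ) ≤ 1 - C / (C + 2 * m) := by
    have h1 : C / (C + 2 * m) ≤ 1 := by
      rw [div_le_one hCm]
      have : (0:ℝ) ≤ 2 * m := by positivity
      linarith
    linarith
  have hkey : (1 - C / (C + 2 * m)) * C = 2 * (m:ℝ) * (C / (C + 2 * m)) := by
    field_simp
    ring
  intro k
  induction k with
  | zero =>
    intro _ v
    rw [hErr0]
    simp only [LinearMap.zero_apply, inner_zero_left]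
    exact mul_nonneg hδ0 real_inner_self_nonneg
  | succ k ih =>
    intro hk v
    have hk' : k ≤ K := Nat.le_of_succ_le hk
    have hk1 : 1 ≤ k + 1 := Nat.le_add_left 1 k
    set S : V (k+1) →ₗ[ℝ] V (k+1) := R (k+1) with hSdef
    set ι : V k →ₗ[ℝ] V (k+1) := Submodule.inclusion (hmono k) with hιdef
    have hsymS : ∀ u w : V (k+1), ⟪S u, w⟫ = ⟪u, S w⟫ := hsym (k+1) hk1 hk
    have h0S : ∀ w : V (k+1), 0 ≤ ⟪S w, w⟫ := hR0 (k+1) hk1 hk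
    obtain ⟨w, hwdef⟩ : ∃ w : V (k+1), w = (S ^ m) v := ⟨_, rfl⟩
    -- inclusion preserves inner products
    have hιinner : ∀ a b : V k, ⟪ι a, ι b⟫ = ⟪a, b⟫ := by
      intro a b
      simp [hιdef, Submodule.coe_inner]
    -- evaluate the error operator
    have hErrv : (Err (k+1)) v = (S ^ m) (w - ι (P k w) + ι (Err k (P k w))) := by
      rw [hErrRec k hk, hwdef]; rfl
    -- orthogonality relations
    have horthp : ⟪w - ι (P k w), ι (P k w)⟫ = 0 := hP k hk w (P k w)
    have horthx : ⟪w - ι (P k w), ι (Err k (P k w))⟫ = 0 := hP k hk w (Err k (P k w))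
    have hwp : ⟪w, ι (P k w)⟫ = ⟪ι (P k w), ι (P k w)⟫ := by
      rw [inner_sub_left] at horthp; linarith
    have hwx : ⟪w, ι (Err k (P k w))⟫ = ⟪ι (P k w), ι (Err k (P k w))⟫ := by
      rw [inner_sub_left] at horthx; linarith
    -- value of the quadratic form
    have hval : ⟪(Err (k+1)) v, v⟫
        = (⟪w, w⟫ - ⟪ι (P k w), ι (P k w)⟫) + ⟪Err k (P k w), P k w⟫ := by
      rw [hErrv, pow_sym_aux S hsymS, ← hwdef]
      rw [inner_add_left, inner_sub_left]
      have c1 : ⟪ι (P k w), w⟫ = ⟪w, ι (P k w)⟫ := real_inner_comm _ _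
      have c2 : ⟪ι (Err k (P k w)), w⟫ = ⟪w, ι (Err k (P k w))⟫ := real_inner_comm _ _
      have c3 : ⟪ι (P k w), ι (Err k (P k w))⟫ = ⟪P k w, Err k (P k w)⟫ := hιinner _ _
      have c4 : ⟪P k w, Err k (P k w)⟫ = ⟪Err k (P k w), P k w⟫ := real_inner_comm _ _
      linarith [hwp, hwx]
    -- approximation property
    have hee : ⟪w - ι (P k w), w - ι (P k w)⟫ = ⟪w, w⟫ - ⟪ι (P k w), ι (P k w)⟫ := by
      rw [inner_sub_left, inner_sub_right, inner_sub_right]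
      have c1 : ⟪ι (P k w), w⟫ = ⟪w, ι (P k w)⟫ := real_inner_comm _ _
      linarith [hwp]
    have hmm : (S ^ (2*m)) v = (S ^ m) w := by
      rw [hwdef, two_mul, pow_add]; rfl
    have hcommp : ∀ x : V (k+1), (S ^ m) (S x) = S ((S ^ m) x) := by
      intro x
      have h : S ^ m * S = S * S ^ m := by rw [← pow_succ, ← pow_succ']
      calc (S ^ m) (S x) = (S ^ m * S) x := rfl
        _ = (S * S ^ m) x := by rw [h]
        _ = S ((S ^ m) x) := rfl
    have hTw : ⟪w - S w, w⟫ = ⟪(S ^ (2*m)) v - S ((S ^ (2*m)) v), v⟫ := by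
      have h4 : (S ^ m) (w - S w) = (S ^ (2*m)) v - S ((S ^ (2*m)) v) := by
        rw [map_sub, hmm, hcommp]
      calc ⟪w - S w, w⟫ = ⟪w - S w, (S ^ m) v⟫ := by rw [← hwdef]
        _ = ⟪(S ^ m) (w - S w), v⟫ := (pow_sym_aux S hsymS m (w - S w) v).symm
        _ = ⟪(S ^ (2*m)) v - S ((S ^ (2*m)) v), v⟫ := by rw [h4]
    have happ : ⟪w, w⟫ - ⟪ι (P k w), ι (P k w)⟫
        ≤ C * ⟪(S ^ (2*m)) v - S ((S ^ (2*m)) v), v⟫ := by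
      have h1 := happrox k hk w
      rw [hee] at h1
      have h3 : ((LinearMap.id : V (k+1) →ₗ[ℝ] V (k+1)) - S) w = w - S w := rfl
      rw [h3, hTw] at h1
      exact h1
    -- ⟪w,w⟫ in terms of v
    have hwwA : ⟪w, w⟫ = ⟪(S ^ (2*m)) v, v⟫ := by
      calc ⟪w, w⟫ = ⟪w, (S ^ m) v⟫ := by rw [← hwdef]
        _ = ⟪(S ^ m) w, v⟫ := (pow_sym_aux S hsymS m w v).symm
        _ = ⟪(S ^ (2*m)) v, v⟫ := by rw [← hmm]
    -- smoother inequality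
    have hsm : 2 * (m:ℝ) * ⟪(S ^ (2*m)) v - S ((S ^ (2*m)) v), v⟫ + ⟪(S ^ (2*m)) v, v⟫
        ≤ ⟪v, v⟫ := smoother_ineq S hsymS h0S m v
    -- induction hypothesis
    have hih : ⟪Err k (P k w), P k w⟫ ≤ (C / (C + 2 * m)) * ⟪P k w, P k w⟫ := ih hk' (P k w)
    have hPq : ⟪P k w, P k w⟫ = ⟪ι (P k w), ι (P k w)⟫ := (hιinner _ _).symm
    -- final arithmetic
    set δ : ℝ := C / (C + 2 * m) with hδdef
    set D : ℝ := ⟪(S ^ (2*m)) v - S ((S ^ (2*m)) v), v⟫ with hDdef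
    set A : ℝ := ⟪(S ^ (2*m)) v, v⟫ with hAdef
    set q : ℝ := ⟪w, w⟫ - ⟪ι (P k w), ι (P k w)⟫ with hqdef
    have hPqA : ⟪P k w, P k w⟫ = A - q := by rw [hPq, hqdef, hwwA]; ring
    have t1 : δ * ⟪P k w, P k w⟫ = δ * A - δ * q := by rw [hPqA]; ring
    have t2 : (1 - δ) * q ≤ (1 - δ) * (C * D) := mul_le_mul_of_nonneg_left happ h1δ
    have t2a : (1 - δ) * q = q - δ * q := by ring
    have t2b : (1 - δ) * (C * D) = δ * (2 * (m:ℝ) * D) := by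
      rw [← mul_assoc, hkey]; ring
    have t3 : δ * (2 * (m:ℝ) * D + A) ≤ δ * ⟪v, v⟫ := mul_le_mul_of_nonneg_left hsm hδ0
    have t3a : δ * (2 * (m:ℝ) * D + A) = δ * (2 * (m:ℝ) * D) + δ * A := by ring
    rw [hval]
    linarith [hih, t1, t2, t2a, t2b, t3, t3a]
end

section
/- (Uniform V-cycle convergence, main theorem.) Let E be a finite-dimensional real inner product space and let V_0 ⊆ V_1 ⊆ ⋯ ⊆ V_K be a chain of subspaces of E. For each 1 ≤ k ≤ K, let R_k : V_k → V_k be linear, self-adjoint with respect to the restricted inner product, and satisfy 0 ≤ ⟪R_k v, v⟫ ≤ ⟪v, v⟫ for all v ∈ V_k; let P_k : V_k → V_{k-1} be the orthogonal projection of V_k onto V_{k-1} and ι_k : V_{k-1} → V_k the inclusion. Fix an integer m ≥ 1 and a constant C > 0, and assume the approximation property ⟪v − ι_k P_k v, v − ι_k P_k v⟫ ≤ C · ⟪(Id − R_k) v, v⟫ for all v ∈ V_k and all 1 ≤ k ≤ K. Define E_0 := 0 on V_0 and, recursively, E_k := R_k^m ∘ (Id_{V_k} − ι_k ∘ P_k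 + ι_k ∘ E_{k-1} ∘ P_k) ∘ R_k^m on V_k. Then for every 0 ≤ k ≤ K and every w ∈ V_k, ‖E_k w‖ ≤ (C/(C + 2m)) · ‖w‖, where ‖·‖ is the norm induced by the inner product. In particular the contraction number of the V-cycle is bounded by C/(C+2m) < 1, uniformly in the number of levels. -/
open RealInnerProductSpace

section Aux

variable {F : Type*} [NormedAddCommGroup F] [InnerProductSpace ℝ F]

private lemma symPow (A : F →ₗ[ℝ] F) (hs : ∀ u v : F, ⟪A u, v⟫ = ⟪u, A v⟫) :
    ∀ (n : ℕ) (u v : F), ⟪(A ^ n) u, v⟫ = ⟪u, (A ^ n) v⟫ := by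
  intro n
  induction n with
  | zero => intro u v; simp
  | succ n ih =>
    intro u v
    rw [pow_succ, Module.End.mul_apply, ih, hs, ← Module.End.mul_apply, ← pow_succ',
      ← pow_succ]

private lemma csForm (A : F →ₗ[ℝ] F) (hs : ∀ u v : F, ⟪A u, v⟫ = ⟪u, A v⟫)
    (h0 : ∀ w : F, 0 ≤ ⟪A w, w⟫) (u v : F) :
    ⟪A u, v⟫ ^ 2 ≤ ⟪A u, u⟫ * ⟪A v, v⟫ := by
  have hq : ∀ t : ℝ, 0 ≤ ⟪A u, u⟫ * (t * t) + (2 * ⟪A u, v⟫) * t + ⟪A v, v⟫ := by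
    intro t
    have h := h0 (t • u + v)
    have hvu : ⟪A v, u⟫ = ⟪A u, v⟫ := by rw [hs v u, real_inner_comm]
    have hexp : ⟪A (t • u + v), t • u + v⟫
        = t * t * ⟪A u, u⟫ + t * ⟪A u, v⟫ + t * ⟪A v, u⟫ + ⟪A v, v⟫ := by
      simp only [map_add, map_smul, inner_add_left, inner_add_right,
        real_inner_smul_left, real_inner_smul_right]
      ring
    rw [hexp, hvu] at h
    nlinarith [h]
  have hd := discrim_le_zero hq
  rw [discrim] at hd
  nlinarith [hd]

private lemma keyPow (A : F →ₗ[ℝ] F) (hs : ∀ u v : F, ⟪A u, v⟫ = ⟪u, A v⟫)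
    (h0 : ∀ w : F, 0 ≤ ⟪A w, w⟫) (w : F) :
    ∀ m : ℕ, (2 * (m : ℝ) + 1) * ⟪(A ^ (2 * m)) w, w⟫
      ≤ ⟪w, w⟫ + 2 * (m : ℝ) * ⟪(A ^ (2 * m + 1)) w, w⟫ := by
  have hsplit : ∀ i j : ℕ, ⟪(A ^ (i + j)) w, w⟫ = ⟪(A ^ i) w, (A ^ j) w⟫ := by
    intro i j
    rw [pow_add, Module.End.mul_apply, symPow A hs i, real_inner_comm]
  have q1 : ∀ n : ℕ, 0 ≤ ⟪(A ^ (2 * n)) w, w⟫ - 2 * ⟪(A ^ (2 * n + 1)) w, w⟫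
      + ⟪(A ^ (2 * n + 2)) w, w⟫ := by
    intro n
    have h := real_inner_self_nonneg (x := (A ^ n) w - (A ^ (n + 1)) w)
    rw [real_inner_sub_sub_self] at h
    have e1 : ⟪(A ^ n) w, (A ^ n) w⟫ = ⟪(A ^ (2 * n)) w, w⟫ := by
      rw [show 2 * n = n + n from by ring, hsplit]
    have e2 : ⟪(A ^ n) w, (A ^ (n + 1)) w⟫ = ⟪(A ^ (2 * n + 1)) w, w⟫ := by
      rw [show 2 * n + 1 = n + (n + 1) from by ring, hsplit]
    have e3 : ⟪(A ^ (n + 1)) w, (A ^ (n + 1)) w⟫ = ⟪(A ^ (2 * n + 2)) w, w⟫ := by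
      rw [show 2 * n + 2 = (n + 1) + (n + 1) from by ring, hsplit]
    linarith [h, e1.ge, e2.ge, e3.ge, e1.le, e2.le, e3.le]
  have q2 : ∀ n : ℕ, 0 ≤ ⟪(A ^ (2 * n + 1)) w, w⟫ - 2 * ⟪(A ^ (2 * n + 2)) w, w⟫
      + ⟪(A ^ (2 * n + 3)) w, w⟫ := by
    intro n
    have h := h0 ((A ^ n) w - (A ^ (n + 1)) w)
    rw [map_sub] at h
    have eA1 : A ((A ^ n) w) = (A ^ (n + 1)) w := by
      rw [← Module.End.mul_apply, ← pow_succ']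
    have eA2 : A ((A ^ (n + 1)) w) = (A ^ (n + 2)) w := by
      rw [← Module.End.mul_apply, ← pow_succ']
    rw [eA1, eA2, inner_sub_left, inner_sub_right, inner_sub_right] at h
    have e1 : ⟪(A ^ (n + 1)) w, (A ^ n) w⟫ = ⟪(A ^ (2 * n + 1)) w, w⟫ := by
      rw [show 2 * n + 1 = (n + 1) + n from by ring, hsplit]
    have e2 : ⟪(A ^ (n + 1)) w, (A ^ (n + 1)) w⟫ = ⟪(A ^ (2 * n + 2)) w, w⟫ := by
      rw [show 2 * n + 2 = (n + 1) + (n + 1) from by ring, hsplit]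
    have e3 : ⟪(A ^ (n + 2)) w, (A ^ n) w⟫ = ⟪(A ^ (2 * n + 2)) w, w⟫ := by
      rw [show 2 * n + 2 = (n + 2) + n from by ring, hsplit]
    have e4 : ⟪(A ^ (n + 2)) w, (A ^ (n + 1)) w⟫ = ⟪(A ^ (2 * n + 3)) w, w⟫ := by
      rw [show 2 * n + 3 = (n + 2) + (n + 1) from by ring, hsplit]
    linarith [h, e1.ge, e2.ge, e3.ge, e4.ge, e1.le, e2.le, e3.le, e4.le]
  intro m
  induction m with
  | zero => simp
  | succ n ih =>
    have hq1 := q1 n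
    have hq2 := q2 n
    have H1 : (0:ℝ) ≤ (2 * (n:ℝ) + 1) * (⟪(A ^ (2 * n)) w, w⟫
        - 2 * ⟪(A ^ (2 * n + 1)) w, w⟫ + ⟪(A ^ (2 * n + 2)) w, w⟫) :=
      mul_nonneg (by positivity) hq1
    have H2 : (0:ℝ) ≤ (2 * (n:ℝ) + 2) * (⟪(A ^ (2 * n + 1)) w, w⟫
        - 2 * ⟪(A ^ (2 * n + 2)) w, w⟫ + ⟪(A ^ (2 * n + 3)) w, w⟫) :=
      mul_nonneg (by positivity) hq2
    rw [show 2 * (n + 1) = 2 * n + 2 from by ring,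
      show 2 * n + 2 + 1 = 2 * n + 3 from by ring]
    push_cast
    nlinarith [H1, H2, ih]

private lemma normBound (A : F →ₗ[ℝ] F) (hs : ∀ u v : F, ⟪A u, v⟫ = ⟪u, A v⟫)
    (h0 : ∀ w : F, 0 ≤ ⟪A w, w⟫) (δ : ℝ) (hδ : 0 ≤ δ)
    (h1 : ∀ w : F, ⟪A w, w⟫ ≤ δ * ⟪w, w⟫) (w : F) : ‖A w‖ ≤ δ * ‖w‖ := by
  have hcs := csForm A hs h0 w (A w)
  have h2 := h1 w
  have h3 := h1 (A w)
  have hn : ⟪A w, A w⟫ = ‖A w‖ ^ 2 := real_inner_self_eq_norm_sq _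
  have hw : ⟪w, w⟫ = ‖w‖ ^ 2 := real_inner_self_eq_norm_sq _
  have h4 : (‖A w‖ ^ 2) ^ 2 ≤ (δ * ‖w‖ ^ 2) * (δ * ‖A w‖ ^ 2) := by
    calc (‖A w‖ ^ 2) ^ 2 = ⟪A w, A w⟫ ^ 2 := by rw [hn]
      _ ≤ ⟪A w, w⟫ * ⟪A (A w), A w⟫ := hcs
      _ ≤ (δ * ⟪w, w⟫) * (δ * ⟪A w, A w⟫) :=
          mul_le_mul h2 h3 (h0 (A w)) (mul_nonneg hδ real_inner_self_nonneg)
      _ = (δ * ‖w‖ ^ 2) * (δ * ‖A w‖ ^ 2) := by rw [hn, hw]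
  rcases eq_or_lt_of_le (norm_nonneg (A w)) with h | h
  · rw [← h]
    positivity
  · have h5 : ‖A w‖ ^ 2 ≤ (δ * ‖w‖) ^ 2 := by nlinarith [h4, mul_pos h h]
    nlinarith [h5, norm_nonneg (A w), mul_nonneg hδ (norm_nonneg w), h]

/-- The inductive step of the V-cycle convergence proof, stated abstractly. -/
private lemma stepLemma {G W : Type*} [NormedAddCommGroup G] [InnerProductSpace ℝ G]
    [NormedAddCommGroup W] [InnerProductSpace ℝ W]
    (j : W →ₗ[ℝ] G) (Q : G →ₗ[ℝ] W)
    (hj : ∀ x y : W, ⟪j x, j y⟫ = ⟪x, y⟫)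
    (horth : ∀ (v : G) (x : W), ⟪v - j (Q v), j x⟫ = 0)
    (A : G →ₗ[ℝ] G) (hsA : ∀ u v : G, ⟪A u, v⟫ = ⟪u, A v⟫)
    (h0A : ∀ v : G, 0 ≤ ⟪A v, v⟫)
    (Ek : W →ₗ[ℝ] W) (hEsym : ∀ x y : W, ⟪Ek x, y⟫ = ⟪x, Ek y⟫)
    (C : ℝ) (hC : 0 < C) (m : ℕ) (hD : 0 < C + 2 * (m : ℝ))
    (hE0 : ∀ x : W, 0 ≤ ⟪Ek x, x⟫)
    (hE1 : ∀ x : W, ⟪Ek x, x⟫ ≤ (C / (C + 2 * (m : ℝ))) * ⟪x, x⟫)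
    (happrox : ∀ v : G, ⟪v - j (Q v), v - j (Q v)⟫ ≤ C * ⟪v - A v, v⟫)
    (Enew : G →ₗ[ℝ] G)
    (hEnew : Enew = A ^ m * (LinearMap.id - j.comp Q + j.comp (Ek.comp Q)) * A ^ m) :
    (∀ u v : G, ⟪Enew u, v⟫ = ⟪u, Enew v⟫) ∧
      ∀ w : G, 0 ≤ ⟪Enew w, w⟫ ∧ ⟪Enew w, w⟫ ≤ (C / (C + 2 * (m : ℝ))) * ⟪w, w⟫ := by
  have hjv : ∀ (x : W) (v : G), ⟪j x, v⟫ = ⟪x, Q v⟫ := by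
    intro x v
    have h1 := horth v x
    have h2 : ⟪j x, v - j (Q v)⟫ = 0 := by rw [real_inner_comm]; exact h1
    have h3 := inner_sub_right (𝕜 := ℝ) (j x) v (j (Q v))
    rw [hj] at h3
    linarith [h2, h3]
  set T : G →ₗ[ℝ] G := LinearMap.id - j.comp Q + j.comp (Ek.comp Q) with hTdef
  have hTapp : ∀ v : G, T v = v - j (Q v) + j (Ek (Q v)) := fun v => rfl
  have hTinner : ∀ u v : G,
      ⟪T u, v⟫ = ⟪u - j (Q u), v - j (Q v)⟫ + ⟪Ek (Q u), Q v⟫ := by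
    intro u v
    have h2 : ⟪u - j (Q u), v⟫ = ⟪u - j (Q u), v - j (Q v)⟫ := by
      have h4 := inner_sub_right (𝕜 := ℝ) (u - j (Q u)) v (j (Q v))
      have h5 := horth u (Q v)
      linarith [h4, h5]
    rw [hTapp, inner_add_left, h2, hjv]
  have hTsym : ∀ u v : G, ⟪T u, v⟫ = ⟪u, T v⟫ := by
    intro u v
    have h1 := hTinner u v
    have h2 := hTinner v u
    have h3 : ⟪T v, u⟫ = ⟪u, T v⟫ := real_inner_comm _ _
    have e1 : ⟪v - j (Q v), u - j (Q u)⟫ = ⟪u - j (Q u), v - j (Q v)⟫ :=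
      real_inner_comm _ _
    have e2 : ⟪Ek (Q v), Q u⟫ = ⟪Ek (Q u), Q v⟫ := by
      rw [hEsym]; exact real_inner_comm _ _
    linarith [h1, h2, h3.ge, h3.le, e1.ge, e1.le, e2.ge, e2.le]
  have hAm := symPow A hsA m
  have hEapp : ∀ v : G, Enew v = (A ^ m) (T ((A ^ m) v)) := by
    intro v; rw [hEnew]; rfl
  constructor
  · intro u v
    rw [hEapp, hEapp, hAm (T ((A ^ m) u)) v, hTsym, hAm u (T ((A ^ m) v))]
  · intro w
    have hEw : ⟪Enew w, w⟫ = ⟪T ((A ^ m) w), (A ^ m) w⟫ := by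
      rw [hEapp]; exact hAm _ _
    have hTv := hTinner ((A ^ m) w) ((A ^ m) w)
    have hs0 : (0:ℝ) ≤ ⟪(A ^ m) w - j (Q ((A ^ m) w)), (A ^ m) w - j (Q ((A ^ m) w))⟫ :=
      real_inner_self_nonneg
    have he0 := hE0 (Q ((A ^ m) w))
    have he1 := hE1 (Q ((A ^ m) w))
    -- Pythagoras
    have hpyth : ⟪(A ^ m) w, (A ^ m) w⟫
        = ⟪(A ^ m) w - j (Q ((A ^ m) w)), (A ^ m) w - j (Q ((A ^ m) w))⟫
          + ⟪Q ((A ^ m) w), Q ((A ^ m) w)⟫ := by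
      have h := real_inner_add_add_self ((A ^ m) w - j (Q ((A ^ m) w))) (j (Q ((A ^ m) w)))
      rw [horth ((A ^ m) w) (Q ((A ^ m) w)), hj] at h
      have hx : (A ^ m) w - j (Q ((A ^ m) w)) + j (Q ((A ^ m) w)) = (A ^ m) w := by abel
      rw [hx] at h
      linarith [h]
    -- approximation
    have happ := happrox ((A ^ m) w)
    have hsubL : ⟪(A ^ m) w - A ((A ^ m) w), (A ^ m) w⟫
        = ⟪(A ^ m) w, (A ^ m) w⟫ - ⟪A ((A ^ m) w), (A ^ m) w⟫ :=
      inner_sub_left _ _ _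
    rw [hsubL] at happ
    -- key polynomial inequality
    have hkey := keyPow A hsA h0A w m
    have h2m : ⟪(A ^ (2 * m)) w, w⟫ = ⟪(A ^ m) w, (A ^ m) w⟫ := by
      rw [show 2 * m = m + m from by ring, pow_add, Module.End.mul_apply]
      exact hAm _ _
    have hpow1 : (A ^ (m + 1)) w = A ((A ^ m) w) := by
      rw [pow_succ']; rfl
    have h2m1 : ⟪(A ^ (2 * m + 1)) w, w⟫ = ⟪A ((A ^ m) w), (A ^ m) w⟫ := by
      rw [show 2 * m + 1 = m + (m + 1) from by ring, pow_add, Module.End.mul_apply,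
        hAm, hpow1]
    rw [h2m, h2m1] at hkey
    constructor
    · rw [hEw, hTv]
      exact add_nonneg hs0 he0
    · rw [hEw, hTv, div_mul_eq_mul_div, le_div_iff₀ hD]
      have hmn : (0:ℝ) ≤ 2 * (m:ℝ) := by positivity
      have hcancel : C / (C + 2 * (m:ℝ)) * ⟪Q ((A ^ m) w), Q ((A ^ m) w)⟫
          * (C + 2 * (m:ℝ)) = C * ⟪Q ((A ^ m) w), Q ((A ^ m) w)⟫ := by
        field_simp
      have hf1 : ⟪Ek (Q ((A ^ m) w)), Q ((A ^ m) w)⟫ * (C + 2 * (m:ℝ))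
          ≤ C * ⟪Q ((A ^ m) w), Q ((A ^ m) w)⟫ := by
        have := mul_le_mul_of_nonneg_right he1 hD.le
        linarith [this, hcancel.ge, hcancel.le]
      have hf2 := mul_le_mul_of_nonneg_left happ hmn
      have hf3 := mul_le_mul_of_nonneg_left hkey hC.le
      have hf4 : C * ⟪(A ^ m) w, (A ^ m) w⟫
          = C * ⟪(A ^ m) w - j (Q ((A ^ m) w)), (A ^ m) w - j (Q ((A ^ m) w))⟫
            + C * ⟪Q ((A ^ m) w), Q ((A ^ m) w)⟫ := by
        rw [hpyth]; ring
      nlinarith [hf1, hf2, hf3, hf4.le, hf4.ge]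

end Aux

/-- Uniform V-cycle convergence (main theorem).  For a chain of subspaces
`V 0 ≤ V 1 ≤ ⋯ ≤ V K` with self-adjoint smoothing error operators `R k` satisfying
`0 ≤ R k ≤ I`, orthogonal projections `P k : V (k+1) → V k` satisfying the approximation
property, and the symmetric V-cycle recursion with `m ≥ 1` smoothing steps, the error
propagation operators contract uniformly: `‖Err k w‖ ≤ (C/(C + 2m)) ‖w‖`. -/
theorem vcycle_uniform_convergence
    {E : Type*} [NormedAddCommGroup E] [InnerProductSpace ℝ E] [FiniteDimensional ℝ E]
    (K : ℕ) (V : ℕ → Submodule ℝ E) (hmono : ∀ k, V k ≤ V (k + 1))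
    (R : ∀ k, V k →ₗ[ℝ] V k)
    (hsym : ∀ k, 1 ≤ k → k ≤ K → ∀ u v : V k, ⟪R k u, v⟫ = ⟪u, R k v⟫)
    (hR0 : ∀ k, 1 ≤ k → k ≤ K → ∀ v : V k, 0 ≤ ⟪R k v, v⟫)
    (hR1 : ∀ k, 1 ≤ k → k ≤ K → ∀ v : V k, ⟪R k v, v⟫ ≤ ⟪v, v⟫)
    (P : ∀ k, V (k + 1) →ₗ[ℝ] V k)
    (hP : ∀ k, k + 1 ≤ K → ∀ v : V (k + 1), ∀ w : V k,
      ⟪v - Submodule.inclusion (hmono k) (P k v), Submodule.inclusion (hmono k) w⟫ = 0)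
    (m : ℕ) (hm : 1 ≤ m) (C : ℝ) (hC : 0 < C)
    (happrox : ∀ k, k + 1 ≤ K → ∀ v : V (k + 1),
      ⟪v - Submodule.inclusion (hmono k) (P k v), v - Submodule.inclusion (hmono k) (P k v)⟫
        ≤ C * ⟪((LinearMap.id : V (k + 1) →ₗ[ℝ] V (k + 1)) - R (k + 1)) v, v⟫)
    (Err : ∀ k, V k →ₗ[ℝ] V k)
    (hErr0 : Err 0 = 0)
    (hErrRec : ∀ k, k + 1 ≤ K →
      Err (k + 1) = R (k + 1) ^ m *
        ((LinearMap.id : V (k + 1) →ₗ[ℝ] V (k + 1))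
          - (Submodule.inclusion (hmono k)).comp (P k)
          + (Submodule.inclusion (hmono k)).comp ((Err k).comp (P k))) *
        R (k + 1) ^ m) :
    ∀ k ≤ K, ∀ w : V k, ‖Err k w‖ ≤ (C / (C + 2 * (m : ℝ))) * ‖w‖ := by
  have hm0 : (0:ℝ) ≤ (m:ℝ) := Nat.cast_nonneg m
  have hD : (0:ℝ) < C + 2 * (m:ℝ) := by linarith
  have hδ0 : (0:ℝ) ≤ C / (C + 2 * (m:ℝ)) := div_nonneg hC.le hD.le
  have hj : ∀ k (x y : V k),
      ⟪Submodule.inclusion (hmono k) x, Submodule.inclusion (hmono k) y⟫ = ⟪x, y⟫ := by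
    intro k x y
    simp [Submodule.coe_inner, Submodule.coe_inclusion]
  have main : ∀ k, k ≤ K → (∀ u v : V k, ⟪Err k u, v⟫ = ⟪u, Err k v⟫) ∧
      (∀ w : V k, 0 ≤ ⟪Err k w, w⟫ ∧
        ⟪Err k w, w⟫ ≤ (C / (C + 2 * (m:ℝ))) * ⟪w, w⟫) := by
    intro k
    induction k with
    | zero =>
      intro _
      refine ⟨?_, ?_⟩
      · intro u v; simp [hErr0]
      · intro w
        refine ⟨by simp [hErr0], ?_⟩
        simp only [hErr0, LinearMap.zero_apply, inner_zero_left]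
        exact mul_nonneg hδ0 real_inner_self_nonneg
    | succ k ih =>
      intro hk1
      obtain ⟨ihsym, ihb⟩ := ih (Nat.le_of_succ_le hk1)
      have h1k : 1 ≤ k + 1 := Nat.succ_le_succ (Nat.zero_le k)
      have happrox' : ∀ v : V (k + 1),
          ⟪v - Submodule.inclusion (hmono k) (P k v),
            v - Submodule.inclusion (hmono k) (P k v)⟫
            ≤ C * ⟪v - R (k + 1) v, v⟫ := by
        intro v
        have h := happrox k hk1 v
        rwa [LinearMap.sub_apply, LinearMap.id_apply] at h
      exact stepLemma (Submodule.inclusion (hmono k)) (P k) (hj k) (hP k hk1)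
        (R (k + 1)) (hsym (k + 1) h1k hk1) (hR0 (k + 1) h1k hk1)
        (Err k) ihsym C hC m hD (fun x => (ihb x).1) (fun x => (ihb x).2)
        happrox' (Err (k + 1)) (hErrRec k hk1)
  intro k hk w
  obtain ⟨hs, hb⟩ := main k hk
  exact normBound (Err k) hs (fun x => (hb x).1) _ hδ0 (fun x => (hb x).2) w
end
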